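/- There exists a unique $a_0 \in (1/2, 1)$ such that $I(a) = \frac{\sqrt{1-a}}{a^{3/2}} \arctan\left(\sqrt{\frac{a}{1-a}}\right) - \frac{1}{2} - \frac{1-a}{a}$ is positive for $a \in [1/2, a_0)$, zero at $a = a_0$, and negative for $a \in (a_0, 1)$. -/

import Mathlib

open Set Real

noncomputable def Ifun (a : ℝ) : ℝ :=
  Real.sqrt (1-a) / a ^ ((3:ℝ)/2) * Real.arctan (Real.sqrt (a/(1-a)))
    - 1/2 - (1-a)/a

lemma key_trig {θ : ℝ} (h1 : 0 < θ) (h2 : θ < π/2) :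
    3 * Real.sin θ * Real.cos θ < θ * (1 + 2 * Real.cos θ ^ 2) := by
  set g : ℝ → ℝ := fun x => x * (1 + 2 * Real.cos x ^ 2) - 3 * Real.sin x * Real.cos x with hg
  have hderiv : ∀ x : ℝ, HasDerivAt g
      (4 * Real.sin x ^ 2 - 4 * x * Real.sin x * Real.cos x) x := by
    intro x
    have hA : HasDerivAt (fun x : ℝ => x * (1 + 2 * Real.cos x ^ 2))
        (1 * (1 + 2 * Real.cos x ^ 2) + x * (2 * (2 * Real.cos x ^ 1 * -Real.sin x))) x :=
      (hasDerivAt_id x).mul ((((Real.hasDerivAt_cos x).pow 2).const_mul 2).const_add 1)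
    have hB : HasDerivAt (fun x : ℝ => 3 * Real.sin x * Real.cos x)
        (3 * Real.cos x * Real.cos x + 3 * Real.sin x * -Real.sin x) x :=
      (((Real.hasDerivAt_sin x).const_mul 3).mul (Real.hasDerivAt_cos x))
    have := hA.sub hB
    refine this.congr_deriv (Eq.symm ?_)
    have h := Real.sin_sq_add_cos_sq x
    ring_nf
    nlinarith [h]
  have hmono : StrictMonoOn g (Icc 0 (π/2)) := by
    apply strictMonoOn_of_deriv_pos (convex_Icc _ _)
    · exact (Continuous.sub ((continuous_id.mul (by continuity))) (by continuity)).continuousOn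
    · intro x hx
      rw [interior_Icc] at hx
      rw [(hderiv x).deriv]
      have hs : 0 < Real.sin x :=
        Real.sin_pos_of_pos_of_lt_pi hx.1 (hx.2.trans (by linarith [pi_pos]))
      have hc : 0 < Real.cos x := Real.cos_pos_of_mem_Ioo ⟨by linarith [pi_pos, hx.1], hx.2⟩
      have ht : x < Real.tan x := Real.lt_tan hx.1 hx.2
      rw [Real.tan_eq_sin_div_cos, lt_div_iff₀ hc] at ht
      nlinarith
  have h0 : g 0 = 0 := by simp [hg]
  have := hmono (left_mem_Icc.2 (by positivity)) ⟨h1.le, h2.le⟩ h1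
  rw [h0] at this
  simp only [hg] at this
  linarith

lemma Ifun_hasDeriv {a : ℝ} (ha0 : 0 < a) (ha1 : a < 1) :
    HasDerivAt Ifun
      ((3 * Real.sqrt a * Real.sqrt (1-a)
        - (3 - 2*a) * Real.arctan (Real.sqrt a / Real.sqrt (1-a)))
        / (2 * Real.sqrt (1-a) * Real.sqrt a ^ 5)) a := by
  have h1a : (0:ℝ) < 1 - a := by linarith
  have hs : 0 < Real.sqrt a := Real.sqrt_pos.2 ha0
  have hc : 0 < Real.sqrt (1-a) := Real.sqrt_pos.2 h1a
  have hf : HasDerivAt (fun x : ℝ => Real.sqrt (1-x)) (1 / (2 * Real.sqrt (1-a)) * (0-1)) a :=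
    (Real.hasDerivAt_sqrt h1a.ne').comp a ((hasDerivAt_const a 1).sub (hasDerivAt_id a))
  have hg : HasDerivAt (fun x : ℝ => x ^ ((3:ℝ)/2)) ((3/2) * a ^ ((3:ℝ)/2 - 1)) a :=
    Real.hasDerivAt_rpow_const (Or.inl ha0.ne')
  have hu : HasDerivAt (fun x : ℝ => x/(1-x)) ((1*(1-a) - a*(0-1))/(1-a)^2) a :=
    (hasDerivAt_id a).div ((hasDerivAt_const a 1).sub (hasDerivAt_id a)) h1a.ne'
  have hune : a/(1-a) ≠ 0 := by positivity
  have hsu : HasDerivAt (fun x : ℝ => Real.sqrt (x/(1-x)))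
      (1 / (2 * Real.sqrt (a/(1-a))) * ((1*(1-a) - a*(0-1))/(1-a)^2)) a :=
    (Real.hasDerivAt_sqrt hune).comp a hu
  have hat : HasDerivAt (fun x : ℝ => Real.arctan (Real.sqrt (x/(1-x))))
      (1 / (1 + Real.sqrt (a/(1-a)) ^ 2) *
        (1 / (2 * Real.sqrt (a/(1-a))) * ((1*(1-a) - a*(0-1))/(1-a)^2))) a :=
    (Real.hasDerivAt_arctan _).comp a hsu
  have hgne : a ^ ((3:ℝ)/2) ≠ 0 := by positivity
  have hq : HasDerivAt (fun x : ℝ => Real.sqrt (1-x) / x ^ ((3:ℝ)/2))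
      ((1 / (2 * Real.sqrt (1-a)) * (0-1) * a ^ ((3:ℝ)/2)
        - Real.sqrt (1-a) * ((3/2) * a ^ ((3:ℝ)/2 - 1))) / (a ^ ((3:ℝ)/2))^2) a :=
    hf.div hg hgne
  have h3 : HasDerivAt (fun x : ℝ => (1-x)/x) (((0-1)*a - (1-a)*1)/a^2) a :=
    ((hasDerivAt_const a 1).sub (hasDerivAt_id a)).div (hasDerivAt_id a) ha0.ne'
  have H := ((hq.mul hat).sub_const (1/2)).sub h3
  refine H.congr_deriv (Eq.symm ?_)
  have hsq : Real.sqrt a ^ 2 = a := Real.sq_sqrt ha0.le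
  have hcq : Real.sqrt (1-a) ^ 2 = 1 - a := Real.sq_sqrt h1a.le
  have hdiv : Real.sqrt (a/(1-a)) = Real.sqrt a / Real.sqrt (1-a) := Real.sqrt_div ha0.le _
  have hr32 : a ^ ((3:ℝ)/2) = Real.sqrt a ^ 3 := by
    rw [show ((3:ℝ)/2) = (1/2) * (3:ℕ) by norm_num, Real.rpow_mul ha0.le,
      Real.rpow_natCast, ← Real.sqrt_eq_rpow]
  have hr12 : a ^ ((3:ℝ)/2 - 1) = Real.sqrt a := by
    rw [show ((3:ℝ)/2 - 1) = ((1:ℝ)/2) by norm_num, ← Real.sqrt_eq_rpow]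
  rw [hdiv, hr32, hr12]
  set s := Real.sqrt a with hsdef
  set c := Real.sqrt (1-a) with hcdef
  have ha2 : a = s^2 := hsq.symm
  have hcq2 : c^2 = 1 - s^2 := by rw [← ha2]; exact hcq
  rw [ha2]
  rw [show (1:ℝ) - s^2 = c^2 from hcq2.symm]
  have e1 : 1 + (s/c)^2 = 1/c^2 := by
    field_simp
    linarith [hcq2]
  rw [e1]
  have hsum : s^2 + c^2 = 1 := by linarith [hcq2]
  field_simp
  linear_combination (3*Real.arctan (s/c) - 3*s*c) * hsum

lemma Ifun_deriv_neg {a : ℝ} (ha0 : 0 < a) (ha1 : a < 1) :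
    (3 * Real.sqrt a * Real.sqrt (1-a)
        - (3 - 2*a) * Real.arctan (Real.sqrt a / Real.sqrt (1-a)))
        / (2 * Real.sqrt (1-a) * Real.sqrt a ^ 5) < 0 := by
  have h1a : (0:ℝ) < 1 - a := by linarith
  have hs : 0 < Real.sqrt a := Real.sqrt_pos.2 ha0
  have hc : 0 < Real.sqrt (1-a) := Real.sqrt_pos.2 h1a
  set s := Real.sqrt a with hsdef
  set c := Real.sqrt (1-a) with hcdef
  have hsq : s ^ 2 = a := Real.sq_sqrt ha0.le
  have hcq : c ^ 2 = 1 - a := Real.sq_sqrt h1a.le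
  set θ := Real.arctan (s/c) with hθ
  have hθ0 : 0 < θ := by
    have := Real.arctan_strictMono (div_pos hs hc)
    rwa [Real.arctan_zero] at this
  have hθ2 : θ < π/2 := Real.arctan_lt_pi_div_two _
  have e1 : 1 + (s/c)^2 = (1/c)^2 := by
    field_simp
    linarith [hsq, hcq]
  have hsin : Real.sin θ = s := by
    rw [hθ, Real.sin_arctan, e1, Real.sqrt_sq (by positivity)]
    field_simp
  have hcos : Real.cos θ = c := by
    rw [hθ, Real.cos_arctan, e1, Real.sqrt_sq (by positivity)]
    field_simp
  have hkey := key_trig hθ0 hθ2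
  rw [hsin, hcos] at hkey
  apply div_neg_of_neg_of_pos
  · have : 1 + 2 * c ^ 2 = 3 - 2 * a := by linarith [hcq]
    nlinarith [hkey]
  · positivity

lemma Ifun_contOn : ContinuousOn Ifun (Ico (1/2:ℝ) 1) := by
  apply ContinuousOn.sub
  apply ContinuousOn.sub
  · apply ContinuousOn.mul
    · apply ContinuousOn.div
      · exact (Real.continuous_sqrt.comp (continuous_const.sub continuous_id)).continuousOn
      · exact fun x _ => (Real.continuousAt_rpow_const x _ (Or.inr (by norm_num))).continuousWithinAt
      · intro x hx
        have : (0:ℝ) < x := lt_of_lt_of_le (by norm_num) hx.1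
        positivity
    · apply Real.continuous_arctan.comp_continuousOn
      apply ContinuousOn.sqrt
      apply ContinuousOn.div continuousOn_id
        (continuous_const.sub continuous_id).continuousOn
      intro x hx
      have : x < 1 := hx.2
      intro h; simp at h; linarith
  · exact continuousOn_const
  · apply ContinuousOn.div (continuous_const.sub continuous_id).continuousOn continuousOn_id
    intro x hx
    have : (0:ℝ) < x := lt_of_lt_of_le (by norm_num) hx.1
    exact this.ne'

lemma Ifun_anti : StrictAntiOn Ifun (Ico (1/2:ℝ) 1) := by
  apply strictAntiOn_of_deriv_neg (convex_Ico _ _) Ifun_contOn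
  intro x hx
  rw [interior_Ico] at hx
  have h0 : (0:ℝ) < x := lt_trans (by norm_num) hx.1
  rw [(Ifun_hasDeriv h0 hx.2).deriv]
  exact Ifun_deriv_neg h0 hx.2

lemma Ifun_half : Ifun (1/2) = π/2 - 3/2 := by
  have h1 : (1:ℝ) - 1/2 = 1/2 := by norm_num
  have h2 : ((1:ℝ)/2) / (1 - 1/2) = 1 := by norm_num
  unfold Ifun
  rw [h2, h1, Real.sqrt_one, Real.arctan_one]
  rw [Real.sqrt_eq_rpow, div_eq_mul_inv, ← Real.rpow_neg (by norm_num : (0:ℝ) ≤ 1/2),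
    ← Real.rpow_add (by norm_num : (0:ℝ) < 1/2)]
  norm_num
  ring

lemma Ifun_96 : Ifun (24/25) < 0 := by
  have h1 : Real.sqrt (1 - 24/25) = 1/5 := by
    rw [show (1:ℝ) - 24/25 = (1/5)^2 by norm_num, Real.sqrt_sq (by norm_num)]
  have hP : (108/125 : ℝ) < (24/25 : ℝ) ^ ((3:ℝ)/2) := by
    have hr32 : (24/25:ℝ) ^ ((3:ℝ)/2) = (24/25) * Real.sqrt (24/25) := by
      rw [show ((3:ℝ)/2) = 1 + (1/2:ℝ) by norm_num,
        Real.rpow_add (by norm_num : (0:ℝ) < 24/25), Real.rpow_one, ← Real.sqrt_eq_rpow]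
    rw [hr32]
    have : (9/10:ℝ) < Real.sqrt (24/25) := by
      rw [show (9/10:ℝ) = Real.sqrt ((9/10)^2) from (Real.sqrt_sq (by norm_num)).symm]
      apply Real.sqrt_lt_sqrt (by norm_num)
      norm_num
    nlinarith
  have hθle : Real.arctan (Real.sqrt ((24/25) / (1 - 24/25))) < π/2 :=
    Real.arctan_lt_pi_div_two _
  have hθ0 : 0 ≤ Real.arctan (Real.sqrt ((24/25) / (1 - 24/25))) := by
    rw [← Real.arctan_zero]
    exact Real.arctan_strictMono.monotone (Real.sqrt_nonneg _)
  have hPpos : (0:ℝ) < (24/25 : ℝ) ^ ((3:ℝ)/2) := by positivity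
  unfold Ifun
  rw [h1]
  have hterm : (1/5) / (24/25 : ℝ) ^ ((3:ℝ)/2)
      * Real.arctan (Real.sqrt ((24/25) / (1 - 24/25))) < 13/24 := by
    have hb : (1/5) / (24/25 : ℝ) ^ ((3:ℝ)/2)
        * Real.arctan (Real.sqrt ((24/25) / (1 - 24/25)))
        ≤ (1/5) / (24/25 : ℝ) ^ ((3:ℝ)/2) * (π/2) := by
      apply mul_le_mul_of_nonneg_left hθle.le (by positivity)
    apply lt_of_le_of_lt hb
    rw [div_mul_eq_mul_div, div_lt_iff₀ hPpos]
    nlinarith [Real.pi_lt_d2]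
  have : ((1:ℝ) - 24/25) / (24/25) = 1/24 := by norm_num
  rw [this]
  linarith

theorem stmt_10 :
    ∃! a₀ : ℝ, a₀ ∈ Ioo (1/2 : ℝ) 1 ∧
      (∀ a ∈ Ico (1/2 : ℝ) a₀, 0 < Ifun a) ∧
      Ifun a₀ = 0 ∧
      (∀ a ∈ Ioo a₀ (1:ℝ), Ifun a < 0) := by
  have hhalfpos : 0 < Ifun (1/2) := by
    rw [Ifun_half]; linarith [Real.pi_gt_three]
  have hsub : Icc (1/2:ℝ) (24/25) ⊆ Ico (1/2:ℝ) 1 := by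
    intro x hx; exact ⟨hx.1, lt_of_le_of_lt hx.2 (by norm_num)⟩
  have hivt := intermediate_value_Icc' (by norm_num : (1/2:ℝ) ≤ 24/25)
    (Ifun_contOn.mono hsub)
  have h0mem : (0:ℝ) ∈ Icc (Ifun (24/25)) (Ifun (1/2)) := ⟨Ifun_96.le, hhalfpos.le⟩
  obtain ⟨a₀, ha₀mem, ha₀0⟩ := hivt h0mem
  have ha₀half : (1/2:ℝ) < a₀ := by
    rcases lt_or_eq_of_le ha₀mem.1 with h | h
    · exact h
    · exfalso; rw [← h] at ha₀0; linarith
  have ha₀1 : a₀ < 1 := lt_of_le_of_lt ha₀mem.2 (by norm_num)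
  have ha₀Ico : a₀ ∈ Ico (1/2:ℝ) 1 := ⟨ha₀mem.1, ha₀1⟩
  have claim1 : ∀ a ∈ Ico (1/2:ℝ) a₀, 0 < Ifun a := by
    intro a ha
    have haIco : a ∈ Ico (1/2:ℝ) 1 := ⟨ha.1, lt_trans ha.2 ha₀1⟩
    have := Ifun_anti haIco ha₀Ico ha.2
    rw [ha₀0] at this; exact this
  have claim2 : ∀ a ∈ Ioo a₀ (1:ℝ), Ifun a < 0 := by
    intro a ha
    have haIco : a ∈ Ico (1/2:ℝ) 1 := ⟨le_of_lt (lt_trans ha₀half ha.1), ha.2⟩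
    have := Ifun_anti ha₀Ico haIco ha.1
    rw [ha₀0] at this; exact this
  refine ⟨a₀, ⟨⟨ha₀half, ha₀1⟩, claim1, ha₀0, claim2⟩, ?_⟩
  rintro b ⟨hbmem, hbpos, hbzero, hbneg⟩
  rcases lt_trichotomy b a₀ with h | h | h
  · exfalso
    have : 0 < Ifun b := claim1 b ⟨hbmem.1.le, h⟩
    linarith [hbzero, this]
  · exact h
  · exfalso
    have : 0 < Ifun a₀ := hbpos a₀ ⟨ha₀mem.1, h⟩
    linarith [ha₀0, this]
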